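/- For every real constant ℓ ≠ 0, each of the three functions f₁(r) = −r, f₂(r) = 3r, and f₃(r) = r + r²/(2ℓ²) satisfies equation (19) at every point r of ℝ. -/

import Mathlib

/-- A real function `f` of `r` satisfies equation (19) at the point `r`:
`2 f² f''' + 2 f (f'-3) f'' - (f'+1)(f'-1)(f'-3) = 0`. -/
def SatisfiesEq19 (f : ℝ → ℝ) (r : ℝ) : Prop :=
  2 * (f r) ^ 2 * deriv (deriv (deriv f)) r
    + 2 * f r * (deriv f r - 3) * deriv (deriv f) r
    - (deriv f r + 1) * (deriv f r - 1) * (deriv f r - 3) = 0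

/-- For every nonzero real constant `ℓ`, each of `f₁(r) = -r`, `f₂(r) = 3r`
and `f₃(r) = r + r²/(2ℓ²)` satisfies equation (19) at every point of `ℝ`. -/
theorem elementary_solutions_eq19 (ℓ : ℝ) (hℓ : ℓ ≠ 0) (r : ℝ) :
    SatisfiesEq19 (fun x => -x) r ∧
    SatisfiesEq19 (fun x => 3 * x) r ∧
    SatisfiesEq19 (fun x => x + x ^ 2 / (2 * ℓ ^ 2)) r := by
  refine ⟨?_, ?_, ?_⟩
  · have h1 : deriv (fun x : ℝ => -x) = fun _ => (-1 : ℝ) := by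
      funext x; simp
    have h2 : deriv (deriv (fun x : ℝ => -x)) = fun _ => (0 : ℝ) := by
      rw [h1]; exact deriv_const' _
    have h3 : deriv (deriv (deriv (fun x : ℝ => -x))) = fun _ => (0 : ℝ) := by
      rw [h2]; exact deriv_const' _
    unfold SatisfiesEq19
    rw [h3, h2, h1]
    norm_num
  · have h1 : deriv (fun x : ℝ => 3 * x) = fun _ => (3 : ℝ) := by
      funext x
      simpa using (hasDerivAt_id x).const_mul (3 : ℝ) |>.deriv
    have h2 : deriv (deriv (fun x : ℝ => 3 * x)) = fun _ => (0 : ℝ) := by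
      rw [h1]; exact deriv_const' _
    have h3 : deriv (deriv (deriv (fun x : ℝ => 3 * x))) = fun _ => (0 : ℝ) := by
      rw [h2]; exact deriv_const' _
    unfold SatisfiesEq19
    rw [h3, h2, h1]
    norm_num
  · have h1 : deriv (fun x : ℝ => x + x ^ 2 / (2 * ℓ ^ 2)) =
        fun x => 1 + x / ℓ ^ 2 := by
      funext x
      have hd : HasDerivAt (fun x : ℝ => x + x ^ 2 / (2 * ℓ ^ 2))
          (1 + x / ℓ ^ 2) x := by
        have h2 : HasDerivAt (fun x : ℝ => x ^ 2) (2 * x) x := by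
          simpa using hasDerivAt_pow 2 x
        have this : HasDerivAt (fun x : ℝ => x + x ^ 2 / (2 * ℓ ^ 2)) (1 + 2 * x / (2 * ℓ ^ 2)) x := (hasDerivAt_id x).add (h2.div_const (2 * ℓ ^ 2))
        convert this using 1
        field_simp
      exact hd.deriv
    have h2 : deriv (deriv (fun x : ℝ => x + x ^ 2 / (2 * ℓ ^ 2))) =
        fun _ => 1 / ℓ ^ 2 := by
      rw [h1]
      funext x
      have hd : HasDerivAt (fun x : ℝ => 1 + x / ℓ ^ 2) (1 / ℓ ^ 2) x := by
        simpa using (hasDerivAt_id x).div_const (ℓ ^ 2)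
      exact hd.deriv
    have h3 : deriv (deriv (deriv (fun x : ℝ => x + x ^ 2 / (2 * ℓ ^ 2)))) =
        fun _ => (0 : ℝ) := by
      rw [h2]; exact deriv_const' _
    unfold SatisfiesEq19
    rw [h3, h2, h1]
    simp only
    field_simp
    ring
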